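/- Let G be a group, χ : G → (ℝ, +) a nonzero homomorphism, M = G_χ, and let K and H be finite subgroups of G. Then [M/K, M/H] is finitely generated as a W_MK-set if and only if for every subgroup K' of H the set Ω_{K'} := {mH | m ∈ M, Km = mK'} is either empty or W_MK-transitive. -/

import Mathlib

/-- `[M/K, M/H]` for `M = G_χ`: the set of cosets `mH` with `m ∈ G_χ` and `Km ⊆ mH`. -/
def morSetChi {G : Type*} [Group G] (χ : G → ℝ) (K H : Set G) : Set (Set G) :=
  {X | ∃ m : G, 0 ≤ χ m ∧ X = (m * ·) '' H ∧ (· * m) '' K ⊆ (m * ·) '' H}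

/-- Representatives of elements of `W_MK = {xK | x ∈ G_χ, Kx = xK}` for `M = G_χ`. -/
def weylChi {G : Type*} [Group G] (χ : G → ℝ) (K : Set G) : Set G :=
  {x | 0 ≤ χ x ∧ (· * x) '' K = (x * ·) '' K}

/-- `Ω_{K'} = {mH | m ∈ G_χ, Km = mK'}` for `M = G_χ`. -/
def OmegaChi {G : Type*} [Group G] (χ : G → ℝ) (K H K' : Set G) : Set (Set G) :=
  {X | ∃ m : G, 0 ≤ χ m ∧ X = (m * ·) '' H ∧ (· * m) '' K = (m * ·) '' K'}

section
variable {G : Type*} [Group G] {χ : G → ℝ}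

lemma img_comp (x m : G) (S : Set G) :
    (x * ·) '' ((m * ·) '' S) = ((x * m) * ·) '' S := by
  rw [Set.image_image]; simp [mul_assoc]

lemma chi_one (hhom : ∀ a b : G, χ (a * b) = χ a + χ b) : χ (1 : G) = 0 := by
  have := hhom 1 1; simp at this; linarith

lemma chi_inv (hhom : ∀ a b : G, χ (a * b) = χ a + χ b) (g : G) : χ g⁻¹ = - χ g := by
  have := hhom g g⁻¹; simp at this; linarith [chi_one hhom]

lemma chi_pow (hhom : ∀ a b : G, χ (a * b) = χ a + χ b) (g : G) (n : ℕ) :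
    χ (g ^ n) = n * χ g := by
  induction n with
  | zero => simpa using chi_one hhom
  | succ k ih => rw [pow_succ, hhom, ih]; push_cast; ring

lemma chi_fin (hhom : ∀ a b : G, χ (a * b) = χ a + χ b) {H : Subgroup G}
    (hH : (H : Set G).Finite) {g : G} (hg : g ∈ H) : χ g = 0 := by
  haveI : Finite H := hH.to_subtype
  obtain ⟨n, hn, hgn⟩ := isOfFinOrder_iff_pow_eq_one.mp
    (isOfFinOrder_of_finite (⟨g, hg⟩ : H))
  have hgn' : g ^ n = 1 := by
    have := congrArg (Subtype.val) hgn
    simpa using this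
  have := chi_pow hhom g n
  rw [hgn', chi_one hhom] at this
  have hn' : (0:ℝ) < n := by exact_mod_cast hn
  nlinarith

lemma chi_coset_eq (hhom : ∀ a b : G, χ (a * b) = χ a + χ b) {H : Subgroup G}
    (hHfin : (H : Set G).Finite) {m n : G}
    (h : (m * ·) '' (H : Set G) = (n * ·) '' (H : Set G)) : χ m = χ n := by
  have hn : n ∈ (m * ·) '' (H : Set G) := by
    rw [h]; exact ⟨1, H.one_mem, by simp⟩
  obtain ⟨h₁, hh₁, he⟩ := hn
  replace he : m * h₁ = n := he
  have := hhom m h₁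
  rw [he] at this
  rw [this, chi_fin hhom hHfin hh₁]; ring

lemma lemB' (hhom : ∀ a b : G, χ (a * b) = χ a + χ b) {Kc Hc S : Set G} {x : G} {X : Set G}
    (hx : x ∈ weylChi χ Kc) (hX : X ∈ OmegaChi χ Kc Hc S) :
    (x * ·) '' X ∈ OmegaChi χ Kc Hc S := by
  obtain ⟨hx0, hxK⟩ := hx
  obtain ⟨m, hm0, rfl, hmS⟩ := hX
  refine ⟨x * m, by rw [hhom]; linarith, (img_comp x m Hc), ?_⟩
  ext g
  constructor
  · rintro ⟨k, hk, rfl⟩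
    have h1 : k * x ∈ (x * ·) '' Kc := by rw [← hxK]; exact ⟨k, hk, rfl⟩
    obtain ⟨k₂, hk₂, hk₂e⟩ := h1
    replace hk₂e : x * k₂ = k * x := hk₂e
    have h2 : k₂ * m ∈ (m * ·) '' S := by rw [← hmS]; exact ⟨k₂, hk₂, rfl⟩
    obtain ⟨s, hs, hse⟩ := h2
    replace hse : m * s = k₂ * m := hse
    refine ⟨s, hs, ?_⟩
    show x * m * s = k * (x * m)
    calc x * m * s = x * (m * s) := by group
      _ = x * (k₂ * m) := by rw [hse]
      _ = (x * k₂) * m := by group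
      _ = (k * x) * m := by rw [hk₂e]
      _ = k * (x * m) := by group
  · rintro ⟨s, hs, rfl⟩
    have h2 : m * s ∈ (· * m) '' Kc := by rw [hmS]; exact ⟨s, hs, rfl⟩
    obtain ⟨k₂, hk₂, hk₂e⟩ := h2
    replace hk₂e : k₂ * m = m * s := hk₂e
    have h1 : x * k₂ ∈ (· * x) '' Kc := by rw [hxK]; exact ⟨k₂, hk₂, rfl⟩
    obtain ⟨k, hk, hke⟩ := h1
    replace hke : k * x = x * k₂ := hke
    refine ⟨k, hk, ?_⟩
    show k * (x * m) = x * m * s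
    calc k * (x * m) = (k * x) * m := by group
      _ = (x * k₂) * m := by rw [← hke]
      _ = x * (k₂ * m) := by group
      _ = x * (m * s) := by rw [hk₂e]
      _ = x * m * s := by group

/-- dominance: larger χ-value lies in the orbit of smaller. -/
lemma lemA (hhom : ∀ a b : G, χ (a * b) = χ a + χ b) {Kc S : Set G} (Hc : Set G) {m₀ m : G}
    (h₀ : 0 ≤ χ m₀)
    (hK₀ : (· * m₀) '' Kc = (m₀ * ·) '' S) (hKm : (· * m) '' Kc = (m * ·) '' S)
    (hle : χ m₀ ≤ χ m) :
    ∃ x ∈ weylChi χ Kc, (m * ·) '' Hc = (x * ·) '' ((m₀ * ·) '' Hc) := by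
  refine ⟨m * m₀⁻¹, ⟨by rw [hhom, chi_inv hhom]; linarith, ?_⟩, ?_⟩
  · ext g
    constructor
    · rintro ⟨k, hk, rfl⟩
      have h1 : k * m ∈ (m * ·) '' S := by rw [← hKm]; exact ⟨k, hk, rfl⟩
      obtain ⟨s, hs, hse⟩ := h1
      replace hse : m * s = k * m := hse
      have h2 : m₀ * s ∈ (· * m₀) '' Kc := by rw [hK₀]; exact ⟨s, hs, rfl⟩
      obtain ⟨k₁, hk₁, hk₁e⟩ := h2
      replace hk₁e : k₁ * m₀ = m₀ * s := hk₁e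
      refine ⟨k₁, hk₁, ?_⟩
      show (m * m₀⁻¹) * k₁ = k * (m * m₀⁻¹)
      calc (m * m₀⁻¹) * k₁ = m * m₀⁻¹ * (k₁ * m₀) * m₀⁻¹ := by group
        _ = m * m₀⁻¹ * (m₀ * s) * m₀⁻¹ := by rw [hk₁e]
        _ = (m * s) * m₀⁻¹ := by group
        _ = (k * m) * m₀⁻¹ := by rw [hse]
        _ = k * (m * m₀⁻¹) := by group
    · rintro ⟨k₁, hk₁, rfl⟩
      have h2 : k₁ * m₀ ∈ (m₀ * ·) '' S := by rw [← hK₀]; exact ⟨k₁, hk₁, rfl⟩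
      obtain ⟨s, hs, hse⟩ := h2
      replace hse : m₀ * s = k₁ * m₀ := hse
      have h1 : m * s ∈ (· * m) '' Kc := by rw [hKm]; exact ⟨s, hs, rfl⟩
      obtain ⟨k, hk, hke⟩ := h1
      replace hke : k * m = m * s := hke
      refine ⟨k, hk, ?_⟩
      show k * (m * m₀⁻¹) = (m * m₀⁻¹) * k₁
      calc k * (m * m₀⁻¹) = (k * m) * m₀⁻¹ := by group
        _ = (m * s) * m₀⁻¹ := by rw [hke]
        _ = m * m₀⁻¹ * (m₀ * s) * m₀⁻¹ := by group
        _ = m * m₀⁻¹ * (k₁ * m₀) * m₀⁻¹ := by rw [hse]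
        _ = (m * m₀⁻¹) * k₁ := by group
  · rw [img_comp]
    have : m * m₀⁻¹ * m₀ = m := by group
    rw [this]


lemma coset_eq_of_mem {H : Subgroup G} {n h : G} (hh : h ∈ H) :
    (n * ·) '' (H : Set G) = ((n * h) * ·) '' (H : Set G) := by
  ext g
  constructor
  · rintro ⟨h₁, hh₁, rfl⟩
    exact ⟨h⁻¹ * h₁, H.mul_mem (H.inv_mem hh) hh₁, by show n * h * (h⁻¹ * h₁) = n * h₁; group⟩
  · rintro ⟨h₁, hh₁, rfl⟩
    exact ⟨h * h₁, H.mul_mem hh hh₁, by show n * (h * h₁) = n * h * h₁; group⟩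

/-- two Ω's sharing an element: one-sided inclusion. -/
lemma lemC' (hhom : ∀ a b : G, χ (a * b) = χ a + χ b) {Kc : Set G} {H : Subgroup G}
    (hHfin : (H : Set G).Finite) {S T : Set G} {X : Set G}
    (hS : X ∈ OmegaChi χ Kc (H : Set G) S) (hT : X ∈ OmegaChi χ Kc (H : Set G) T) :
    OmegaChi χ Kc (H : Set G) S ⊆ OmegaChi χ Kc (H : Set G) T := by
  obtain ⟨m, hm0, hXm, hmS⟩ := hS
  obtain ⟨m', hm0', hXm', hmT⟩ := hT
  rw [hXm] at hXm'
  -- find h ∈ H with m * h = m'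
  have hm' : m' ∈ (m * ·) '' (H : Set G) := by
    rw [hXm']; exact ⟨1, H.one_mem, by simp⟩
  obtain ⟨h, hh, hhe⟩ := hm'
  replace hhe : m * h = m' := hhe
  -- key conjugation facts
  have key1 : ∀ s ∈ S, ∃ t ∈ T, s * h = h * t := by
    intro s hs
    have h1 : m * s ∈ (· * m) '' Kc := by rw [hmS]; exact ⟨s, hs, rfl⟩
    obtain ⟨k, hk, hke⟩ := h1
    replace hke : k * m = m * s := hke
    have h2 : k * m' ∈ (m' * ·) '' T := by rw [← hmT]; exact ⟨k, hk, rfl⟩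
    obtain ⟨t, ht, hte⟩ := h2
    replace hte : m' * t = k * m'
    · exact hte
    refine ⟨t, ht, mul_left_cancel (a := m) ?_⟩
    calc m * (s * h) = (m * s) * h := by group
      _ = (k * m) * h := by rw [hke]
      _ = k * (m * h) := by group
      _ = k * m' := by rw [hhe]
      _ = m' * t := by rw [hte]
      _ = (m * h) * t := by rw [hhe]
      _ = m * (h * t) := by group
  have key2 : ∀ t ∈ T, ∃ s ∈ S, h * t = s * h := by
    intro t ht
    have h1 : m' * t ∈ (· * m') '' Kc := by rw [hmT]; exact ⟨t, ht, rfl⟩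
    obtain ⟨k, hk, hke⟩ := h1
    replace hke : k * m' = m' * t := hke
    have h2 : k * m ∈ (m * ·) '' S := by rw [← hmS]; exact ⟨k, hk, rfl⟩
    obtain ⟨s, hs, hse⟩ := h2
    replace hse : m * s = k * m := hse
    refine ⟨s, hs, mul_left_cancel (a := m) ?_⟩
    calc m * (h * t) = (m * h) * t := by group
      _ = m' * t := by rw [hhe]
      _ = k * m' := by rw [← hke]
      _ = k * (m * h) := by rw [hhe]
      _ = (k * m) * h := by group
      _ = (m * s) * h := by rw [hse]
      _ = m * (s * h) := by group
  -- now the inclusion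
  rintro Y ⟨n, hn0, rfl, hnS⟩
  refine ⟨n * h, ?_, coset_eq_of_mem hh, ?_⟩
  · rw [hhom, chi_fin hhom hHfin hh]; linarith
  · ext g
    constructor
    · rintro ⟨k, hk, rfl⟩
      have h1 : k * n ∈ (n * ·) '' S := by rw [← hnS]; exact ⟨k, hk, rfl⟩
      obtain ⟨s, hs, hse⟩ := h1
      replace hse : n * s = k * n := hse
      obtain ⟨t, ht, hte⟩ := key1 s hs
      refine ⟨t, ht, ?_⟩
      show (n * h) * t = k * (n * h)
      calc (n * h) * t = n * (h * t) := by group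
        _ = n * (s * h) := by rw [← hte]
        _ = (n * s) * h := by group
        _ = (k * n) * h := by rw [hse]
        _ = k * (n * h) := by group
    · rintro ⟨t, ht, rfl⟩
      obtain ⟨s, hs, hse⟩ := key2 t ht
      have h1 : n * s ∈ (· * n) '' Kc := by rw [hnS]; exact ⟨s, hs, rfl⟩
      obtain ⟨k, hk, hke⟩ := h1
      replace hke : k * n = n * s := hke
      refine ⟨k, hk, ?_⟩
      show k * (n * h) = (n * h) * t
      calc k * (n * h) = (k * n) * h := by group
        _ = (n * s) * h := by rw [hke]
        _ = n * (s * h) := by group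
        _ = n * (h * t) := by rw [← hse]
        _ = (n * h) * t := by group

lemma lemC (hhom : ∀ a b : G, χ (a * b) = χ a + χ b) {Kc : Set G} {H : Subgroup G}
    (hHfin : (H : Set G).Finite) {S T : Set G} {X : Set G}
    (hS : X ∈ OmegaChi χ Kc (H : Set G) S) (hT : X ∈ OmegaChi χ Kc (H : Set G) T) :
    OmegaChi χ Kc (H : Set G) S = OmegaChi χ Kc (H : Set G) T :=
  Set.Subset.antisymm (lemC' hhom hHfin hS hT) (lemC' hhom hHfin hT hS)

/-- decomposition of `[M/K, M/H]` into `Ω`'s. -/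
lemma lemD {K H : Subgroup G} {X : Set G}
    (hX : X ∈ morSetChi χ (K : Set G) (H : Set G)) :
    ∃ K' : Subgroup G, K' ≤ H ∧ X ∈ OmegaChi χ (K : Set G) (H : Set G) (K' : Set G) := by
  obtain ⟨m, hm0, rfl, hsub⟩ := hX
  refine ⟨Subgroup.map ((MulAut.conj m⁻¹).toMonoidHom) K, ?_, ?_⟩
  · rintro g hg
    obtain ⟨k, hk, rfl⟩ := hg
    have h1 : k * m ∈ (m * ·) '' (H : Set G) := hsub ⟨k, hk, rfl⟩
    obtain ⟨h', hh', hhe⟩ := h1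
    replace hhe : m * h' = k * m := hhe
    have : m⁻¹ * k * m⁻¹⁻¹ = h' := by
      apply mul_left_cancel (a := m)
      rw [hhe]; group
    show (MulAut.conj m⁻¹).toMonoidHom k ∈ H
    have he2 : (MulAut.conj m⁻¹).toMonoidHom k = m⁻¹ * k * m⁻¹⁻¹ := rfl
    rw [he2, this]; exact hh'
  · refine ⟨m, hm0, rfl, ?_⟩
    ext g
    constructor
    · rintro ⟨k, hk, rfl⟩
      refine ⟨m⁻¹ * k * m⁻¹⁻¹, Subgroup.mem_map.mpr ⟨k, hk, rfl⟩, ?_⟩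
      show m * (m⁻¹ * k * m⁻¹⁻¹) = k * m
      group
    · rintro ⟨k', hk', rfl⟩
      obtain ⟨k, hk, hke⟩ := Subgroup.mem_map.mp hk'
      replace hke : m⁻¹ * k * m⁻¹⁻¹ = k' := hke
      refine ⟨k, hk, ?_⟩
      show k * m = m * k'
      rw [← hke]; group

lemma lemE {Kc Hc S : Set G} (hS : S ⊆ Hc) :
    OmegaChi χ Kc Hc S ⊆ morSetChi χ Kc Hc := by
  rintro X ⟨m, h0, rfl, hm⟩
  exact ⟨m, h0, rfl, by rw [hm]; exact Set.image_mono hS⟩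

end

/-- for `M = G_χ` and finite subgroups `K, H` of `G`, the `W_MK`-set
`[M/K, M/H]` is finitely generated iff for every subgroup `K' ≤ H` the set
`Ω_{K'} = {mH | Km = mK'}` is empty or `W_MK`-transitive. -/
theorem stmt14 {G : Type*} [Group G] (χ : G → ℝ)
    (hhom : ∀ a b : G, χ (a * b) = χ a + χ b) (hne : ∃ g : G, χ g ≠ 0)
    (K H : Subgroup G) (hK : (K : Set G).Finite) (hH : (H : Set G).Finite) :
    (∃ F : Set (Set G), F.Finite ∧ F ⊆ morSetChi χ (K : Set G) (H : Set G) ∧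
        morSetChi χ (K : Set G) (H : Set G) =
          {X | ∃ x ∈ weylChi χ (K : Set G), ∃ Y ∈ F, X = (x * ·) '' Y}) ↔
    (∀ K' : Subgroup G, K' ≤ H →
        OmegaChi χ (K : Set G) (H : Set G) (K' : Set G) = ∅ ∨
        ∃ ω ∈ OmegaChi χ (K : Set G) (H : Set G) (K' : Set G),
          OmegaChi χ (K : Set G) (H : Set G) (K' : Set G) =
            {X | ∃ x ∈ weylChi χ (K : Set G), X = (x * ·) '' ω}) := by
  constructor
  · rintro ⟨F, hFfin, hFsub, hFgen⟩ K' hK'H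
    by_cases hemp : OmegaChi χ (K : Set G) (H : Set G) (K' : Set G) = ∅
    · exact Or.inl hemp
    right
    have hcoe : (K' : Set G) ⊆ (H : Set G) := fun g hg => hK'H hg
    have hne' : (OmegaChi χ (K : Set G) (H : Set G) (K' : Set G)).Nonempty :=
      Set.nonempty_iff_ne_empty.mpr hemp
    -- every element of Ω lies in the orbit of some Y ∈ F ∩ Ω
    have hSsub : ∀ X ∈ OmegaChi χ (K : Set G) (H : Set G) (K' : Set G),
        ∃ x ∈ weylChi χ (K : Set G),
          ∃ Y ∈ F ∩ OmegaChi χ (K : Set G) (H : Set G) (K' : Set G), X = (x * ·) '' Y := by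
      intro X hX
      have hXmor : X ∈ morSetChi χ (K : Set G) (H : Set G) := lemE hcoe hX
      rw [hFgen] at hXmor
      obtain ⟨x, hx, Y, hYF, hXe⟩ := hXmor
      obtain ⟨K'', hK''H, hYΩ''⟩ := lemD (hFsub hYF)
      have hXΩ'' : X ∈ OmegaChi χ (K : Set G) (H : Set G) (K'' : Set G) := by
        rw [hXe]; exact lemB' hhom hx hYΩ''
      have hΩeq := lemC hhom hH hXΩ'' hX
      rw [hΩeq] at hYΩ''
      exact ⟨x, hx, Y, ⟨hYF, hYΩ''⟩, hXe⟩
    -- choose representatives for elements of F ∩ Ω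
    have h1 : ∀ Y ∈ F ∩ OmegaChi χ (K : Set G) (H : Set G) (K' : Set G),
        ∃ m : G, 0 ≤ χ m ∧ Y = (m * ·) '' (H : Set G) ∧
          (· * m) '' (K : Set G) = (m * ·) '' (K' : Set G) := fun _ hY => hY.2
    choose! rep h0 hcos hKK using h1
    -- minimal element
    obtain ⟨X₀, hX₀⟩ := hne'
    obtain ⟨x₀, hx₀, Y₀, hY₀, hX₀e⟩ := hSsub X₀ hX₀
    obtain ⟨ω₀, hω₀, hmin⟩ := Set.exists_min_image
      (F ∩ OmegaChi χ (K : Set G) (H : Set G) (K' : Set G)) (fun Y => χ (rep Y))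
      (hFfin.inter_of_left _) ⟨Y₀, hY₀⟩
    refine ⟨ω₀, hω₀.2, ?_⟩
    ext X
    constructor
    · intro hX
      obtain ⟨x, hx, Y, hY, hXe⟩ := hSsub X hX
      obtain ⟨m, hm0, hXm, hmK⟩ := hX
      -- compare χ-values
      have hXco : (m * ·) '' (H : Set G) = ((x * rep Y) * ·) '' (H : Set G) := by
        rw [← img_comp, ← hcos Y hY, ← hXe, hXm]
      have hχm : χ m = χ x + χ (rep Y) := by
        rw [chi_coset_eq hhom hH hXco, hhom]
      have hle : χ (rep ω₀) ≤ χ m := by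
        have := hmin Y hY
        have hx0 : 0 ≤ χ x := hx.1
        linarith
      obtain ⟨x', hx', heq⟩ := lemA hhom (H : Set G) (h0 ω₀ hω₀)
        (hKK ω₀ hω₀) hmK hle
      exact ⟨x', hx', by rw [hXm, heq, ← hcos ω₀ hω₀]⟩
    · rintro ⟨x, hx, rfl⟩
      exact lemB' hhom hx hω₀.2
  · intro hyp
    set SG := {K' : Subgroup G | K' ≤ H ∧
      (OmegaChi χ (K : Set G) (H : Set G) (K' : Set G)).Nonempty} with hSG
    have hSGfin : SG.Finite := by
      have himg : ((fun K' : Subgroup G => (K' : Set G)) '' SG).Finite := by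
        apply hH.finite_subsets.subset
        rintro _ ⟨K', ⟨hle, _⟩, rfl⟩
        exact fun g hg => hle hg
      exact Set.Finite.of_finite_image himg (fun a _ b _ h => SetLike.coe_injective h)
    have h2 : ∀ K' ∈ SG, ∃ ω, ω ∈ OmegaChi χ (K : Set G) (H : Set G) (K' : Set G) ∧
        OmegaChi χ (K : Set G) (H : Set G) (K' : Set G) =
          {X | ∃ x ∈ weylChi χ (K : Set G), X = (x * ·) '' ω} := by
      intro K' hK'
      rcases hyp K' hK'.1 with hempty | ⟨ω, hω, hgen⟩
      · exact absurd hempty (Set.nonempty_iff_ne_empty.mp hK'.2)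
      · exact ⟨ω, hω, hgen⟩
    choose! gen hgen1 hgen2 using h2
    refine ⟨gen '' SG, hSGfin.image _, ?_, ?_⟩
    · rintro _ ⟨K', hK', rfl⟩
      exact lemE (fun g hg => hK'.1 hg) (hgen1 K' hK')
    · ext X
      constructor
      · intro hX
        obtain ⟨K', hle, hXΩ⟩ := lemD hX
        have hK'SG : K' ∈ SG := ⟨hle, ⟨X, hXΩ⟩⟩
        rw [hgen2 K' hK'SG] at hXΩ
        obtain ⟨x, hx, hXe⟩ := hXΩ
        exact ⟨x, hx, gen K', ⟨K', hK'SG, rfl⟩, hXe⟩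
      · rintro ⟨x, hx, Y, ⟨K', hK', rfl⟩, rfl⟩
        exact lemE (fun g hg => hK'.1 hg) (lemB' hhom hx (hgen1 K' hK'))
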